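/- Let L be a PCE language whose signature is eventually periodic with periodic rhythm of directing parameter (q,p) (i.e., the period is a q-tuple of nonnegative integers summing to p, with p > q ≥ 1). Then the local growth rate of L exists and equals p/q: lim_{ℓ→∞} u_L(ℓ+1)/u_L(ℓ) = p/q. -/

import Mathlib

open Filter Topology

/-- Length of the longest common prefix of two words. -/
def lcpLen {A : Type*} [DecidableEq A] : List A → List A → ℕ
  | a :: u, b :: v => if a = b then lcpLen u v + 1 else 0
  | _, _ => 0

/-- `Delta u v`: if `|u| = |v|`, the length of `u` minus the length of the longest
common prefix of `u` and `v`; otherwise `max |u| |v|` (padding convention). -/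
def Delta {A : Type*} [DecidableEq A] (u v : List A) : ℕ :=
  if u.length = v.length then u.length - lcpLen u v else max u.length v.length

/-- Radix (genealogical) order: shorter words first, words of equal length
compared lexicographically. -/
def RadixLt {A : Type*} [LT A] (u v : List A) : Prop :=
  u.length < v.length ∨ (u.length = v.length ∧ List.Lex (· < ·) u v)

/-- A language is PCE if it is prefix-closed and right-extendable. -/
def PCE {A : Type*} (L : Set (List A)) : Prop :=
  (∀ w ∈ L, ∀ u, u <+: w → u ∈ L) ∧ (∀ w ∈ L, ∃ v ∈ L, w <+: v ∧ w ≠ v)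

/-- `rep` enumerates `L` in radix order: it is a bijection from `ℕ` onto `L`
which is strictly increasing for the radix order, so `rep n` is the `(n+1)`-th
word of `L` (the `L`-representation of `n`). -/
def RadixEnum {A : Type*} [LT A] (L : Set (List A)) (rep : ℕ → List A) : Prop :=
  Set.BijOn rep Set.univ L ∧ ∀ m n : ℕ, m < n → RadixLt (rep m) (rep n)

/-- Number of words of `L` of length `ℓ`. -/
noncomputable def uCount {A : Type*} (L : Set (List A)) (ℓ : ℕ) : ℕ :=
  {w ∈ L | w.length = ℓ}.ncard

/-- Number of words of `L` of length at most `ℓ`. -/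
noncomputable def vCount {A : Type*} (L : Set (List A)) (ℓ : ℕ) : ℕ :=
  {w ∈ L | w.length ≤ ℓ}.ncard

/-- The left bank of a word `v`: words of `L` of length at most `|v|` that are
lexicographically smaller than `v`, excluding the prefixes of `v`. -/
def leftBank {A : Type*} [LT A] (L : Set (List A)) (v : List A) : Set (List A) :=
  {w ∈ L | w.length ≤ v.length ∧ List.Lex (· < ·) w v} \ {w | w <+: v}

/-- Degree of the node `w` in the language tree of `L`: the number of letters
`a` with `w·a ∈ L`. -/
noncomputable def nodeDeg {A : Type*} (L : Set (List A)) (w : List A) : ℕ :=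
  {a : A | w ++ [a] ∈ L}.ncard

/-- The signature of `L` (with radix enumeration `rep`): the sequence of degrees
of the nodes in breadth-first (radix) order, the root counting itself as an
extra child (i-tree convention). -/
noncomputable def signature {A : Type*} (L : Set (List A)) (rep : ℕ → List A) (n : ℕ) : ℕ :=
  nodeDeg L (rep n) + if n = 0 then 1 else 0

set_option linter.unusedSectionVars false
set_option maxHeartbeats 1000000

section Comb
variable {A : Type*} [Fintype A] [LinearOrder A] {L : Set (List A)} {rep : ℕ → List A}

lemma finite_len_le (L : Set (List A)) (ℓ : ℕ) : {w ∈ L | w.length ≤ ℓ}.Finite :=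
  (List.finite_length_le A ℓ).subset (fun _ hw => hw.2)

lemma finite_len_eq (L : Set (List A)) (ℓ : ℕ) : {w ∈ L | w.length = ℓ}.Finite :=
  (List.finite_length_le A ℓ).subset (fun _ hw => hw.2.le)

lemma rep_mem (hrep : RadixEnum L rep) (n : ℕ) : rep n ∈ L :=
  hrep.1.1 (Set.mem_univ n)

lemma nil_mem (hL : PCE L) (hrep : RadixEnum L rep) : ([] : List A) ∈ L :=
  hL.1 (rep 0) (rep_mem hrep 0) [] List.nil_prefix

lemma exists_len (hL : PCE L) (hrep : RadixEnum L rep) (ℓ : ℕ) :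
    ∃ w ∈ L, w.length = ℓ := by
  have H : ∀ k : ℕ, ∃ w ∈ L, k ≤ w.length := by
    intro k
    induction k with
    | zero => exact ⟨[], nil_mem hL hrep, Nat.zero_le _⟩
    | succ k ih =>
      obtain ⟨w, hw, hk⟩ := ih
      obtain ⟨v, hv, hpre, hne⟩ := hL.2 w hw
      refine ⟨v, hv, ?_⟩
      have h1 : w.length ≤ v.length := hpre.length_le
      have h2 : w.length ≠ v.length := by
        intro h; exact hne (List.IsPrefix.eq_of_length hpre h)
      omega
  obtain ⟨w, hw, hk⟩ := H ℓ
  exact ⟨w.take ℓ, hL.1 w hw _ (List.take_prefix ℓ w), by simp [hk]⟩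

lemma uCount_pos (hL : PCE L) (hrep : RadixEnum L rep) (ℓ : ℕ) : 0 < uCount L ℓ := by
  rw [uCount, Set.ncard_pos (finite_len_eq L ℓ)]
  obtain ⟨w, hw, h⟩ := exists_len hL hrep ℓ
  exact ⟨w, hw, h⟩

lemma vCount_pos (hL : PCE L) (hrep : RadixEnum L rep) (ℓ : ℕ) : 0 < vCount L ℓ := by
  rw [vCount, Set.ncard_pos (finite_len_le L ℓ)]
  exact ⟨[], nil_mem hL hrep, Nat.zero_le _⟩

lemma vCount_succ (ℓ : ℕ) : vCount L (ℓ + 1) = vCount L ℓ + uCount L (ℓ + 1) := by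
  rw [vCount, vCount, uCount]
  have : {w ∈ L | w.length ≤ ℓ + 1} = {w ∈ L | w.length ≤ ℓ} ∪ {w ∈ L | w.length = ℓ + 1} := by
    ext w; constructor
    · rintro ⟨h1, h2⟩
      rcases Nat.lt_or_ge w.length (ℓ+1) with h | h
      · exact Or.inl ⟨h1, by omega⟩
      · exact Or.inr ⟨h1, by omega⟩
    · rintro (⟨h1, h2⟩ | ⟨h1, h2⟩) <;> exact ⟨h1, by omega⟩
  rw [this, Set.ncard_union_eq ?_ (finite_len_le L ℓ) (finite_len_eq L (ℓ+1))]
  · rw [Set.disjoint_left]; rintro w ⟨_, h1⟩ ⟨_, h2⟩; omega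

lemma repLen_mono (hrep : RadixEnum L rep) : Monotone (fun n => (rep n).length) := by
  apply monotone_nat_of_le_succ
  intro n
  rcases hrep.2 n (n+1) (Nat.lt_succ_self n) with h | ⟨h, _⟩
  · exact h.le
  · exact h.le

lemma pre_Iio (hrep : RadixEnum L rep) (ℓ : ℕ) :
    {n | (rep n).length ≤ ℓ} = Set.Iio (vCount L ℓ) := by
  set T : Set ℕ := {n | (rep n).length ≤ ℓ} with hT
  have himg : rep '' T = {w ∈ L | w.length ≤ ℓ} := by
    ext w; constructor
    · rintro ⟨n, hn, rfl⟩; exact ⟨rep_mem hrep n, hn⟩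
    · rintro ⟨hw, hlen⟩
      obtain ⟨n, -, rfl⟩ := hrep.1.2.2 hw
      exact ⟨n, hlen, rfl⟩
  have hfin : T.Finite := by
    have h1 : T ⊆ rep ⁻¹' {w ∈ L | w.length ≤ ℓ} := fun n hn =>
      Set.mem_preimage.mpr (himg ▸ Set.mem_image_of_mem rep hn)
    exact ((finite_len_le L ℓ).preimage (hrep.1.2.1.mono (Set.subset_univ _))).subset h1
  have hcard : T.ncard = vCount L ℓ := by
    rw [vCount, ← himg, Set.ncard_image_of_injOn (hrep.1.2.1.mono (Set.subset_univ _))]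
  have hdc : ∀ m n : ℕ, m ≤ n → n ∈ T → m ∈ T := by
    intro m n hmn hn
    exact le_trans (repLen_mono hrep hmn) hn
  rw [← hcard]
  ext k; constructor
  · intro hk
    have hsub : Set.Iic k ⊆ T := fun m hm => hdc m k hm hk
    have := Set.ncard_le_ncard hsub hfin
    have hIic : (Set.Iic k).ncard = k + 1 := by
      rw [← Finset.coe_Iic, Set.ncard_coe_finset]; simp
    simp only [Set.mem_Iio]; omega
  · intro hk
    by_contra hkT
    have hsub : T ⊆ Set.Iio k := fun n hn =>
      lt_of_not_ge (fun h => hkT (hdc k n h hn))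
    have := Set.ncard_le_ncard hsub (Set.finite_Iio k)
    have hIio : (Set.Iio k).ncard = k := by
      rw [← Finset.coe_range, Set.ncard_coe_finset]; simp
    simp only [Set.mem_Iio] at hk; omega

end Comb

section Comb2
variable {A : Type*} [Fintype A] [LinearOrder A] {L : Set (List A)} {rep : ℕ → List A}

lemma sum_deg (hrep : RadixEnum L rep) (ℓ : ℕ) :
    ∑ n ∈ Finset.range (vCount L ℓ), nodeDeg L (rep n)
      = ∑ w ∈ (finite_len_le L ℓ).toFinset, nodeDeg L w := by
  apply Finset.sum_bij (fun n _ => rep n)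
  · intro n hn
    simp only [Finset.mem_range] at hn
    have : n ∈ Set.Iio (vCount L ℓ) := hn
    rw [← pre_Iio hrep ℓ] at this
    simp only [Set.Finite.mem_toFinset]
    exact ⟨rep_mem hrep n, this⟩
  · intro m _ n _ h
    exact hrep.1.2.1 (Set.mem_univ m) (Set.mem_univ n) h
  · intro w hw
    simp only [Set.Finite.mem_toFinset] at hw
    obtain ⟨n, -, rfl⟩ := hrep.1.2.2 hw.1
    have : n ∈ Set.Iio (vCount L ℓ) := by rw [← pre_Iio hrep ℓ]; exact hw.2
    exact ⟨n, Finset.mem_range.mpr this, rfl⟩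
  · intro n _; rfl

lemma sum_nodeDeg (hL : PCE L) (hrep : RadixEnum L rep) (ℓ : ℕ) :
    1 + ∑ w ∈ (finite_len_le L ℓ).toFinset, nodeDeg L w = vCount L (ℓ + 1) := by
  classical
  have hdeg : ∀ w : List A, nodeDeg L w = (Finset.univ.filter fun a => w ++ [a] ∈ L).card := by
    intro w
    rw [nodeDeg, ← Set.ncard_coe_finset]
    congr 1
    ext a; simp
  -- target finset of nonempty words of length ≤ ℓ+1
  have hTfin : {x ∈ L | x.length ≤ ℓ + 1 ∧ x ≠ []}.Finite :=
    (finite_len_le L (ℓ+1)).subset (fun x hx => ⟨hx.1, hx.2.1⟩)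
  have hsplit : vCount L (ℓ+1) = 1 + hTfin.toFinset.card := by
    rw [vCount]
    have : {w ∈ L | w.length ≤ ℓ + 1} = {([] : List A)} ∪ {x ∈ L | x.length ≤ ℓ + 1 ∧ x ≠ []} := by
      ext x; constructor
      · rintro ⟨h1, h2⟩
        by_cases hx : x = []
        · exact Or.inl hx
        · exact Or.inr ⟨h1, h2, hx⟩
      · rintro (rfl | ⟨h1, h2, _⟩)
        · exact ⟨nil_mem hL hrep, by simp⟩
        · exact ⟨h1, h2⟩
    rw [this, Set.ncard_union_eq ?_ (Set.finite_singleton _) hTfin]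
    · rw [Set.ncard_singleton, Set.ncard_eq_toFinset_card _ hTfin]
    · rw [Set.disjoint_left]; rintro x rfl ⟨_, _, h⟩; exact h rfl
  rw [hsplit]
  congr 1
  -- biUnion decomposition
  have hinj : ∀ w : List A, Function.Injective (fun a : A => w ++ [a]) := by
    intro w a b h
    simpa using List.append_cancel_left h
  have hcard : ∀ w : List A, nodeDeg L w
      = ((Finset.univ.filter fun a => w ++ [a] ∈ L).image (fun a => w ++ [a])).card := by
    intro w
    rw [Finset.card_image_of_injective _ (hinj w)]
    exact hdeg w
  rw [Finset.sum_congr rfl (fun w _ => hcard w)]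
  rw [← Finset.card_biUnion]
  · congr 1
    ext x
    simp only [Finset.mem_biUnion, Finset.mem_image, Finset.mem_filter, Finset.mem_univ,
      true_and, Set.Finite.mem_toFinset]
    constructor
    · rintro ⟨w, hw, a, ha, rfl⟩
      refine ⟨ha, ?_, by simp⟩
      have hwl : w ∈ L ∧ w.length ≤ ℓ := by simpa using hw
      simp only [List.length_append, List.length_singleton]
      omega
    · rintro ⟨hx, hlen, hne⟩
      refine ⟨x.dropLast, ?_, x.getLast hne, ?_, List.dropLast_append_getLast hne⟩
      · refine ⟨hL.1 x hx _ (List.dropLast_prefix x), ?_⟩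
        have : x.dropLast.length = x.length - 1 := List.length_dropLast
        have hxl : 1 ≤ x.length := List.length_pos_iff.mpr hne
        omega
      · rw [List.dropLast_append_getLast hne]; exact hx
  · intro w hw w' hw' hne
    simp only [Finset.disjoint_left, Finset.mem_image, Finset.mem_filter, Finset.mem_univ, true_and]
    rintro x ⟨a, ha, rfl⟩ ⟨b, hb, hEq⟩
    exact hne ((List.append_inj' hEq rfl).1.symm ▸ rfl)

lemma key_rec (hL : PCE L) (hrep : RadixEnum L rep) (ℓ : ℕ) :
    vCount L (ℓ + 1) = ∑ n ∈ Finset.range (vCount L ℓ), signature L rep n := by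
  have hpos : 0 < vCount L ℓ := vCount_pos hL hrep ℓ
  have : ∑ n ∈ Finset.range (vCount L ℓ), signature L rep n
      = ∑ n ∈ Finset.range (vCount L ℓ), nodeDeg L (rep n)
        + ∑ n ∈ Finset.range (vCount L ℓ), (if n = 0 then 1 else 0) := by
    rw [← Finset.sum_add_distrib]; rfl
  rw [this, Finset.sum_ite_eq' (Finset.range (vCount L ℓ)) 0 (fun _ => 1)]
  rw [if_pos (Finset.mem_range.mpr hpos), sum_deg hrep ℓ]
  have := sum_nodeDeg hL hrep ℓ
  omega
  
end Comb2

section Arith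
variable (r : ℕ → ℕ) (q p : ℕ)

lemma F_add_q (hper : ∀ i, r (i + q) = r i) (hsum : ∑ i ∈ Finset.range q, r i = p) :
    ∀ k, ∑ i ∈ Finset.range (k + q), r i = ∑ i ∈ Finset.range k, r i + p := by
  intro k
  induction k with
  | zero => simpa using hsum
  | succ k ih =>
    have : k + 1 + q = (k + q) + 1 := by omega
    rw [this, Finset.sum_range_succ, ih, Finset.sum_range_succ, hper k]
    ring

lemma F_split (hper : ∀ i, r (i + q) = r i) (hsum : ∑ i ∈ Finset.range q, r i = p) :
    ∀ t s, ∑ i ∈ Finset.range (q * t + s), r i = t * p + ∑ i ∈ Finset.range s, r i := by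
  intro t
  induction t with
  | zero => simp
  | succ t ih =>
    intro s
    have : q * (t + 1) + s = (q * t + s) + q := by ring
    rw [this, F_add_q r q p hper hsum, ih s]
    ring

lemma F_bound (hq : 1 ≤ q) (hper : ∀ i, r (i + q) = r i)
    (hsum : ∑ i ∈ Finset.range q, r i = p) (k : ℕ) :
    |(q : ℤ) * (∑ i ∈ Finset.range k, r i) - p * k| ≤ 2 * p * q := by
  have hk : q * (k / q) + k % q = k := Nat.div_add_mod k q
  have hF := F_split r q p hper hsum (k / q) (k % q)
  rw [hk] at hF
  have hFs_le : ∑ i ∈ Finset.range (k % q), r i ≤ p := by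
    rw [← hsum]
    exact Finset.sum_le_sum_of_subset
      (Finset.range_subset_range.mpr (Nat.mod_lt k (by omega)).le)
  have hmod : k % q < q := Nat.mod_lt k (by omega)
  have h2 : ((∑ i ∈ Finset.range k, r i : ℕ) : ℤ)
      = ((k / q : ℕ) : ℤ) * p + ((∑ i ∈ Finset.range (k % q), r i : ℕ) : ℤ) := by
    exact_mod_cast congrArg (fun n : ℕ => (n : ℤ)) hF
  have h3 : (k : ℤ) = (q : ℤ) * ((k / q : ℕ) : ℤ) + ((k % q : ℕ) : ℤ) := by
    exact_mod_cast hk.symm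
  have h1 : (q : ℤ) * (∑ i ∈ Finset.range k, r i) - p * k
      = (q : ℤ) * ((∑ i ∈ Finset.range (k % q), r i : ℕ) : ℤ) - p * ((k % q : ℕ) : ℤ) := by
    linear_combination (q : ℤ) * h2 - (p : ℤ) * h3
  have e1 : (q : ℤ) * ((∑ i ∈ Finset.range (k % q), r i : ℕ) : ℤ) ≤ q * p := by
    apply mul_le_mul_of_nonneg_left _ (by positivity)
    exact_mod_cast hFs_le
  have e2 : (p : ℤ) * ((k % q : ℕ) : ℤ) ≤ p * q := by
    apply mul_le_mul_of_nonneg_left _ (by positivity)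
    exact_mod_cast hmod.le
  have e3 : (0 : ℤ) ≤ (q : ℤ) * ((∑ i ∈ Finset.range (k % q), r i : ℕ) : ℤ) := by positivity
  have e4 : (0 : ℤ) ≤ (p : ℤ) * ((k % q : ℕ) : ℤ) := by positivity
  have e5 : (q : ℤ) * p = p * q := by ring
  rw [h1, abs_sub_le_iff]
  constructor <;> linarith

end Arith

lemma div_aux {x y z : ℝ} (hz : z ≠ 0) :
    (x/z - y/z)/(y/z - 1) = (x - y)/(y - z) := by
  rw [div_sub_div_same, show y/z - 1 = (y - z)/z by field_simp]
  exact div_div_div_cancel_right₀ hz (x-y) (y-z)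


/-- If a PCE language `L` has an eventually periodic signature whose periodic
rhythm has directing parameter `(q, p)` (a `q`-periodic sequence of nonnegative
integers summing to `p` over one period, `p > q ≥ 1`), then the local growth
rate of `L` exists and equals `p / q`. -/
theorem carry_stmt12 {A : Type*} [Fintype A] [LinearOrder A]
    (L : Set (List A)) (hL : PCE L)
    (rep : ℕ → List A) (hrep : RadixEnum L rep)
    (p q : ℕ) (hq : 1 ≤ q) (hpq : q < p)
    (r : ℕ → ℕ) (hper : ∀ i, r (i + q) = r i)
    (hsum : ∑ i ∈ Finset.range q, r i = p)
    (n₀ : ℕ) (hsig : ∀ n ≥ n₀, signature L rep n = r (n - n₀)) :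
    Tendsto (fun ℓ : ℕ => (uCount L (ℓ + 1) : ℝ) / (uCount L ℓ : ℝ)) atTop
      (nhds ((p : ℝ) / (q : ℝ))) := by
  classical
  set g : ℕ → ℕ := fun m => ∑ n ∈ Finset.range m, signature L rep n with hg
  have hrec : ∀ ℓ, vCount L (ℓ + 1) = g (vCount L ℓ) := fun ℓ => key_rec hL hrep ℓ
  have hgm : ∀ m, n₀ ≤ m → g m = g n₀ + ∑ i ∈ Finset.range (m - n₀), r i := by
    intro m hm
    have hmeq : m = n₀ + (m - n₀) := by omega
    rw [hg]
    simp only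
    conv_lhs => rw [hmeq]
    rw [Finset.sum_range_add]
    congr 1
    refine Finset.sum_congr rfl (fun i _ => ?_)
    rw [hsig (n₀ + i) (by omega)]
    congr 1; omega
  set C : ℤ := 2 * p * q + (q * g n₀ + p * n₀) with hCdef
  have hgb : ∀ m, n₀ ≤ m → |(q : ℤ) * g m - p * m| ≤ C := by
    intro m hm
    rw [hgm m hm]
    have hFb := F_bound r q p hq hper hsum (m - n₀)
    have hkey : (q : ℤ) * (g n₀ + ∑ i ∈ Finset.range (m - n₀), r i) - p * m
        = ((q : ℤ) * (∑ i ∈ Finset.range (m - n₀), r i) - p * ((m - n₀ : ℕ) : ℤ))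
          + ((q : ℤ) * g n₀ - p * n₀) := by
      have hcast : ((m - n₀ : ℕ) : ℤ) = (m : ℤ) - (n₀ : ℤ) := by omega
      push_cast
      rw [hcast]; ring
    push_cast at hkey ⊢
    rw [hkey]
    refine (abs_add_le _ _).trans ?_
    have h2 : |(q : ℤ) * g n₀ - p * n₀| ≤ q * g n₀ + p * n₀ := by
      refine (abs_sub _ _).trans ?_
      rw [abs_of_nonneg (by positivity), abs_of_nonneg (by positivity)]
    push_cast at hFb
    linarith
  have hvlb : ∀ ℓ, ℓ + 1 ≤ vCount L ℓ := by
    intro ℓ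
    induction ℓ with
    | zero => exact vCount_pos hL hrep 0
    | succ ℓ ih =>
      have := vCount_succ (L := L) ℓ
      have := uCount_pos hL hrep (ℓ + 1)
      omega
  set V : ℕ → ℝ := fun ℓ => (vCount L ℓ : ℝ) with hV
  set ρ : ℝ := (p : ℝ) / (q : ℝ) with hρdef
  have hq0 : (0 : ℝ) < q := by positivity
  have hρ : 1 < ρ := by
    rw [hρdef, lt_div_iff₀ hq0]
    simpa using (by exact_mod_cast hpq : (q : ℝ) < p)
  have hVpos : ∀ ℓ, 0 < V ℓ := fun ℓ => by
    have := vCount_pos hL hrep ℓ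
    simp only [hV]; exact_mod_cast this
  have hVtop : Filter.Tendsto V Filter.atTop Filter.atTop := by
    apply Filter.tendsto_atTop_mono (f := fun ℓ : ℕ => (ℓ : ℝ))
    · intro ℓ
      have := hvlb ℓ
      simp only [hV]
      exact_mod_cast (by omega : ℓ ≤ vCount L ℓ)
    · exact tendsto_natCast_atTop_atTop
  have hVb : ∀ ℓ, n₀ ≤ ℓ → |V (ℓ + 1) - ρ * V ℓ| ≤ (C : ℝ) / q := by
    intro ℓ hℓ
    have hm : n₀ ≤ vCount L ℓ := le_trans (by omega : n₀ ≤ ℓ + 1) (hvlb ℓ)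
    have h1 := hgb (vCount L ℓ) hm
    rw [← hrec ℓ] at h1
    have h2 : |(q : ℝ) * V (ℓ + 1) - p * V ℓ| ≤ (C : ℝ) := by
      have h1' : (|(q : ℤ) * (vCount L (ℓ + 1)) - p * (vCount L ℓ)| : ℝ) ≤ (C : ℝ) := by
        exact_mod_cast h1
      push_cast at h1'
      exact h1' 
    have h3 : V (ℓ + 1) - ρ * V ℓ = ((q : ℝ) * V (ℓ + 1) - p * V ℓ) / q := by
      rw [hρdef]; field_simp
    rw [h3, abs_div, abs_of_pos hq0]
    gcongr
  have hratio : Filter.Tendsto (fun ℓ => V (ℓ + 1) / V ℓ) Filter.atTop (nhds ρ) := by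
    have h0 : Filter.Tendsto (fun ℓ => V (ℓ + 1) / V ℓ - ρ) Filter.atTop (nhds 0) := by
      apply squeeze_zero_norm' (a := fun ℓ => (C : ℝ) / q / V ℓ)
      · filter_upwards [Filter.eventually_ge_atTop n₀] with ℓ hℓ
        have h1 := hVb ℓ hℓ
        have h2 := hVpos ℓ
        rw [Real.norm_eq_abs,
          show V (ℓ + 1) / V ℓ - ρ = (V (ℓ + 1) - ρ * V ℓ) / V ℓ by field_simp,
          abs_div, abs_of_pos h2]
        gcongr
      · exact Filter.Tendsto.div_atTop tendsto_const_nhds hVtop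
    have := h0.add_const ρ
    simpa using this
  have hU : ∀ ℓ, (uCount L (ℓ + 1) : ℝ) = V (ℓ + 1) - V ℓ := by
    intro ℓ
    have := vCount_succ (L := L) ℓ
    simp only [hV]
    push_cast [this]
    ring
  have hUpos : ∀ ℓ, (0 : ℝ) < (uCount L ℓ : ℝ) := fun ℓ => by
    exact_mod_cast uCount_pos hL hrep ℓ
  have hB : Filter.Tendsto (fun k => V (k + 2) / V (k + 1)) Filter.atTop (nhds ρ) :=
    hratio.comp (Filter.tendsto_add_atTop_nat 1)
  have hCC : Filter.Tendsto (fun k => V (k + 2) / V k) Filter.atTop (nhds (ρ * ρ)) := by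
    refine (hB.mul hratio).congr (fun k => ?_)
    exact div_mul_div_cancel₀ (hVpos (k + 1)).ne'
  have hnum : Filter.Tendsto (fun k => V (k + 2) / V k - V (k + 1) / V k)
      Filter.atTop (nhds (ρ * ρ - ρ)) := hCC.sub hratio
  have hden : Filter.Tendsto (fun k => V (k + 1) / V k - 1)
      Filter.atTop (nhds (ρ - 1)) := hratio.sub_const 1
  have hρ1 : ρ - 1 ≠ 0 := sub_ne_zero.mpr hρ.ne'
  have hfinal : Filter.Tendsto (fun k => (V (k + 2) - V (k + 1)) / (V (k + 1) - V k))
      Filter.atTop (nhds ρ) := by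
    have h := hnum.div hden hρ1
    have hval : (ρ * ρ - ρ) / (ρ - 1) = ρ := by
      rw [show ρ * ρ - ρ = ρ * (ρ - 1) by ring, mul_div_assoc, div_self hρ1, mul_one]
    rw [hval] at h
    refine h.congr (fun k => ?_)
    exact div_aux (hVpos k).ne'
  rw [← Filter.tendsto_add_atTop_iff_nat 1]
  refine hfinal.congr (fun k => ?_)
  rw [hU (k + 1), hU k]
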